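/- The partial order T(B(·)) is order-isomorphic to the partial order (T̄₂, ≤_gap) of structured finite rooted trees with labels in {0,1} under the weak gap-embeddability relation. -/

import Mathlib

universe u

/-- Finite planar binary trees with leaf labels in `X`. -/
inductive BTree (X : Type u) : Type u
  | leaf : X → BTree X
  | node : BTree X → BTree X → BTree X

/-- Homeomorphic embeddability of leaf-labeled binary trees. -/
inductive BTreeLE {X : Type u} (le : X → X → Prop) : BTree X → BTree X → Prop
  | leaf {x y : X} : le x y → BTreeLE le (BTree.leaf x) (BTree.leaf y)
  | left {s t₁ t₂ : BTree X} : BTreeLE le s t₁ → BTreeLE le s (BTree.node t₁ t₂)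
  | right {s t₁ t₂ : BTree X} : BTreeLE le s t₂ → BTreeLE le s (BTree.node t₁ t₂)
  | node {s₁ s₂ t₁ t₂ : BTree X} : BTreeLE le s₁ t₁ → BTreeLE le s₂ t₂ →
      BTreeLE le (BTree.node s₁ s₂) (BTree.node t₁ t₂)

/-- The terms of `T(B(·))`: either the constant `◦`, or `◦[B]` for a finite planar
binary tree `B` with leaf labels that are themselves terms. -/
inductive TB : Type
  | circ : TB
  | node : BTree TB → TB

/-- The list of leaf labels of a binary tree. -/
def BTree.leaves {X : Type u} : BTree X → List X
  | BTree.leaf x => [x]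
  | BTree.node t₁ t₂ => t₁.leaves ++ t₂.leaves

/-- The ordering on `T(B(·))`: the least reflexive and transitive relation `R` such that
`◦ R t` for all `t`; `s R ◦[B]` whenever `s R t` for some leaf label `t` of `B`; and
`◦[B] R ◦[B']` whenever `B` embeds into `B'` in `B(T(B(·)))` (computed with `R` on the
leaf labels). -/
def TBle (s t : TB) : Prop :=
  ∀ R : TB → TB → Prop,
    Reflexive R → Transitive R →
    (∀ u : TB, R TB.circ u) →
    (∀ (u : TB) (B : BTree TB) (v : TB), v ∈ B.leaves → R u v → R u (TB.node B)) →
    (∀ B B' : BTree TB, BTreeLE R B B' → R (TB.node B) (TB.node B')) →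
    R s t

/-- Finite rooted structured (planar) trees with labels in `Fin 2 = {0,1}`. -/
inductive LTree : Type
  | node : Fin 2 → List LTree → LTree

/-- The label of the root of a tree. -/
def LTree.root : LTree → Fin 2
  | LTree.node a _ => a

mutual
  /-- `GEmb T T'`: there is a weak-gap embedding of `T` into `T'` sending the root of
  `T` to the root of `T'` (so the root labels agree and the forests of immediate
  subtrees embed, respecting the left-right order). -/
  inductive GEmb : LTree → LTree → Prop
    | node {a : Fin 2} {ts ts' : List LTree} :
        GForest ts ts' → GEmb (LTree.node a ts) (LTree.node a ts')

  /-- `GForest ts ts'`: the forest `ts` embeds into the forest `ts'`, sending distinct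
  trees of `ts` into distinct trees of `ts'` in the left-right order; each tree `t` is
  embedded with the gap condition for the label of its root. -/
  inductive GForest : List LTree → List LTree → Prop
    | nil : GForest [] []
    | skip {ts : List LTree} {c : LTree} {ts' : List LTree} :
        GForest ts ts' → GForest ts (c :: ts')
    | cons {t : LTree} {ts : List LTree} {c : LTree} {ts' : List LTree} :
        GGap t.root t c → GForest ts ts' → GForest (t :: ts) (c :: ts')

  /-- `GGap m T T'`: there is a weak-gap embedding of `T` into `T'` sending the root of
  `T` to some node `v` of `T'` such that every node of `T'` strictly above `v` has label
  `≥ m` (this is the gap condition for an edge whose lower endpoint has label `m`). -/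
  inductive GGap : Fin 2 → LTree → LTree → Prop
    | here {m : Fin 2} {T T' : LTree} : GEmb T T' → GGap m T T'
    | deeper {m b : Fin 2} {T : LTree} {cs : List LTree} {c : LTree} :
        m ≤ b → c ∈ cs → GGap m T c → GGap m T (LTree.node b cs)
end

/-- Trees of `T̄₂`: every node with label `0` has at most one immediate successor and
every node with label `1` has exactly two. -/
inductive OkT2 : LTree → Prop
  | zero_nil : OkT2 (LTree.node 0 [])
  | zero_one {t : LTree} : OkT2 t → OkT2 (LTree.node 0 [t])
  | one_two {t₁ t₂ : LTree} : OkT2 t₁ → OkT2 t₂ → OkT2 (LTree.node 1 [t₁, t₂])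

/-- The set `T̄₂`: structured finite rooted `{0,1}`-labeled trees whose root is labeled
`0`, label-`0` nodes have at most one child and label-`1` nodes exactly two. -/
def TBar2 : Type := {T : LTree // OkT2 T ∧ T.root = 0}

/-- The weak gap-embeddability relation on `T̄₂` (no constraint above the image of the
root, hence gap bound `0`). -/
def gapLE (s t : TBar2) : Prop := GGap 0 s.1 t.1


/-! ### Auxiliary development -/

mutual
/-- Encode a term of `T(B(·))` as a `{0,1}`-labeled tree. -/
def enc : TB → LTree
  | .circ => .node 0 []
  | .node B => .node 0 [encB B]
/-- Encode a leaf-labeled binary tree as a `{0,1}`-labeled tree. -/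
def encB : BTree TB → LTree
  | .leaf t => enc t
  | .node L R => .node 1 [encB L, encB R]
end

lemma enc_root (t : TB) : (enc t).root = 0 := by
  cases t <;> simp [enc, LTree.root]

lemma enc_ex (t : TB) : ∃ l, enc t = LTree.node 0 l := by
  cases t <;> simp [enc]

mutual
lemma okT2_enc : ∀ t : TB, OkT2 (enc t)
  | .circ => by simpa [enc] using OkT2.zero_nil
  | .node B => by simpa [enc] using OkT2.zero_one (okT2_encB B)
lemma okT2_encB : ∀ B : BTree TB, OkT2 (encB B)
  | .leaf t => by simpa [encB] using okT2_enc t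
  | .node L R => by simpa [encB] using OkT2.one_two (okT2_encB L) (okT2_encB R)
end

lemma fin2_le_one (r : Fin 2) : r ≤ 1 := Fin.le_last r

lemma sizeOf_pos_ltree (T : LTree) : 1 ≤ sizeOf T := by
  cases T; simp; omega

lemma gforest_nil_left : ∀ l : List LTree, GForest [] l
  | [] => GForest.nil
  | _ :: l => GForest.skip (gforest_nil_left l)

lemma gemb_refl_aux : ∀ n : ℕ,
    (∀ T : LTree, sizeOf T ≤ n → GEmb T T) ∧
    (∀ ts : List LTree, sizeOf ts ≤ n → GForest ts ts) := by
  intro n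
  induction n with
  | zero =>
    constructor
    · intro T hT; exfalso; have := sizeOf_pos_ltree T; omega
    · intro ts hts; cases ts with
      | nil => exact GForest.nil
      | cons a l => simp at hts
  | succ n ih =>
    constructor
    · intro T hT
      cases T with
      | node a ts =>
        refine GEmb.node (ih.2 ts ?_)
        simp at hT; omega
    · intro ts hts
      cases ts with
      | nil => exact GForest.nil
      | cons a l =>
        simp at hts
        have h1 := sizeOf_pos_ltree a
        refine GForest.cons (GGap.here (ih.1 a ?_)) (ih.2 l ?_) <;> omega

lemma gemb_refl (T : LTree) : GEmb T T := (gemb_refl_aux (sizeOf T)).1 T le_rfl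

lemma ggap_refl (m : Fin 2) (T : LTree) : GGap m T T := GGap.here (gemb_refl T)

/-- From a forest embedding, each member of the left forest gap-embeds into some
member of the right forest. -/
lemma gforest_mem : ∀ (cs'' cs : List LTree), GForest cs cs'' → ∀ c ∈ cs,
    ∃ c'' ∈ cs'', GGap c.root c c'' := by
  intro cs''
  induction cs'' with
  | nil => intro cs h c hc; cases h; simp at hc
  | cons c₀ rest ih =>
    intro cs h c hc
    cases h with
    | skip h' =>
      obtain ⟨c'', hc'', hg⟩ := ih _ h' c hc
      exact ⟨c'', List.mem_cons_of_mem _ hc'', hg⟩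
    | cons hg h' =>
      rcases List.mem_cons.1 hc with rfl | hc
      · exact ⟨c₀, List.mem_cons_self, hg⟩
      · obtain ⟨c'', hc'', hg'⟩ := ih _ h' c hc
        exact ⟨c'', List.mem_cons_of_mem _ hc'', hg'⟩

lemma ggap_root_le {m : Fin 2} {T T' : LTree} (h : GGap m T T') (hm : m ≤ T.root) :
    m ≤ T'.root := by
  cases h with
  | here he => cases he with | node hf => exact hm
  | deeper hb _ _ => exact hb

lemma sizeOf_lt_of_mem_ltree {c : LTree} {l : List LTree} (h : c ∈ l) :
    sizeOf c < sizeOf l := List.sizeOf_lt_of_mem h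

/-- Mutual transitivity of gap embeddings, by induction on a size budget. -/
lemma gtrans_aux : ∀ n : ℕ,
    (∀ T T' T'' : LTree, 2 * sizeOf T'' ≤ n →
      GEmb T T' → GEmb T' T'' → GEmb T T'') ∧
    (∀ ts ts' ts'' : List LTree, 2 * sizeOf ts'' + 1 ≤ n →
      GForest ts ts' → GForest ts' ts'' → GForest ts ts'') ∧
    (∀ (m m' : Fin 2) (T T' T'' : LTree), 2 * sizeOf T'' + 1 ≤ n →
      m ≤ m' → m ≤ T.root → GGap m T T' → GGap m' T' T'' → GGap m T T'') := by
  intro n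
  induction n with
  | zero =>
    refine ⟨?_, ?_, ?_⟩
    · intro T T' T'' h; have := sizeOf_pos_ltree T''; omega
    · intro ts ts' ts'' h; omega
    · intro m m' T T' T'' h; omega
  | succ n ih =>
    obtain ⟨ihE, ihF, ihG⟩ := ih
    refine ⟨?_, ?_, ?_⟩
    · -- GEmb trans
      intro T T' T'' hsz h1 h2
      cases h2 with
      | @node a ts' ts'' hf' =>
        cases h1 with
        | @node a' ts _ hf =>
          refine GEmb.node (ihF ts ts' ts'' ?_ hf hf')
          simp at hsz
          have : 1 ≤ sizeOf (a : Fin 2) := by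
            cases a using Fin.cases <;> simp <;> omega
          omega
    · -- GForest trans
      intro ts ts' ts'' hsz h1 h2
      cases h2 with
      | nil => cases h1; exact GForest.nil
      | @skip ts' c rest hf' =>
        refine GForest.skip (ihF ts ts' rest ?_ h1 hf')
        simp at hsz
        have := sizeOf_pos_ltree c
        omega
      | @cons t' tsr' c rest' hgap hf' =>
        -- ts' = t' :: tsr', ts'' = c :: rest'
        cases h1 with
        | skip h1' =>
          refine GForest.skip (ihF _ _ _ ?_ h1' hf')
          simp at hsz; have := sizeOf_pos_ltree c; omega
        | @cons t tsr _ _ hgap0 hf0 =>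
          have hle : t.root ≤ t'.root := ggap_root_le hgap0 le_rfl
          simp at hsz
          have hc := sizeOf_pos_ltree c
          refine GForest.cons (ihG t.root t'.root t t' c ?_ hle le_rfl hgap0 hgap)
            (ihF _ _ _ ?_ hf0 hf') <;> omega
    · -- GGap trans
      intro m m' T T' T'' hsz hmm' hmr h1 h2
      cases h2 with
      | here he' =>
        cases h1 with
        | here he =>
          exact GGap.here (ihE T T' T'' (by omega) he he')
        | @deeper _ b _ cs c hb hc hg =>
          -- T' = node b cs, GEmb T' T''
          cases he' with
          | @node _ _ cs'' hf =>
            obtain ⟨c'', hc'', hg''⟩ := gforest_mem cs'' cs hf c hc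
            have hmc : m ≤ c.root := ggap_root_le hg hmr
            have hsc : sizeOf c'' < sizeOf cs'' := sizeOf_lt_of_mem_ltree hc''
            have hss : sizeOf cs'' < sizeOf (LTree.node b cs'') := by simp
            refine GGap.deeper hb hc'' (ihG m c.root T c c'' ?_ hmc hmr hg hg'')
            omega
      | @deeper _ b _ cs c hb hc hg' =>
        have hsc : sizeOf c < sizeOf cs := sizeOf_lt_of_mem_ltree hc
        have hss : sizeOf cs < sizeOf (LTree.node b cs) := by simp
        refine GGap.deeper (le_trans hmm' hb) hc (ihG m m' T T' c ?_ hmm' hmr h1 hg')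
        omega

lemma ggap_trans {m m' : Fin 2} {T T' T'' : LTree} (hmm' : m ≤ m') (hmr : m ≤ T.root)
    (h1 : GGap m T T') (h2 : GGap m' T' T'') : GGap m T T'' :=
  (gtrans_aux (2 * sizeOf T'' + 1)).2.2 m m' T T' T'' le_rfl hmm' hmr h1 h2

lemma ggap0_trans {T T' T'' : LTree} (h1 : GGap 0 T T') (h2 : GGap 0 T' T'') :
    GGap 0 T T'' :=
  ggap_trans (Fin.zero_le _) (Fin.zero_le _) h1 h2

lemma TBle_refl (t : TB) : TBle t t := fun _ hr _ _ _ _ => hr t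

lemma TBle_trans {s t u : TB} (h1 : TBle s t) (h2 : TBle t u) : TBle s u :=
  fun R hr htr hc hl hn => htr (h1 R hr htr hc hl hn) (h2 R hr htr hc hl hn)

lemma TBle_circ (u : TB) : TBle TB.circ u := fun _ _ _ hc _ _ => hc u

lemma TBle_leaf {u v : TB} {B : BTree TB} (hv : v ∈ B.leaves) (h : TBle u v) :
    TBle u (TB.node B) :=
  fun R hr htr hc hl hn => hl u B v hv (h R hr htr hc hl hn)

lemma BTreeLE_mono {X : Type u} {le le' : X → X → Prop}
    (h : ∀ x y, le x y → le' x y) :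
    ∀ {B B' : BTree X}, BTreeLE le B B' → BTreeLE le' B B' := by
  intro B B' hb
  induction hb with
  | leaf hxy => exact BTreeLE.leaf (h _ _ hxy)
  | left _ ih => exact BTreeLE.left ih
  | right _ ih => exact BTreeLE.right ih
  | node _ _ ih1 ih2 => exact BTreeLE.node ih1 ih2

lemma TBle_node {B B' : BTree TB} (h : BTreeLE TBle B B') :
    TBle (TB.node B) (TB.node B') :=
  fun R hr htr hc hl hn =>
    hn B B' (BTreeLE_mono (fun _ _ hxy => hxy R hr htr hc hl hn) h)

/-! ### Forward direction -/

/-- If `v` is a leaf label of `B` and `X` gap-embeds into `enc v`, then `X`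
gap-embeds into `encB B`. -/
lemma ggap_encB_of_leaf {v : TB} : ∀ {B : BTree TB}, v ∈ B.leaves →
    ∀ {X : LTree} {m : Fin 2}, m = 0 → GGap m X (enc v) → GGap m X (encB B) := by
  intro B
  induction B with
  | leaf w =>
    intro hv X m hm h
    simp [BTree.leaves] at hv
    subst hv
    simpa [encB] using h
  | node L R ihL ihR =>
    intro hv X m hm h
    subst hm
    simp [BTree.leaves] at hv
    rw [encB]
    rcases hv with hv | hv
    · exact GGap.deeper (Fin.zero_le _) (by simp) (ihL hv rfl h)
    · exact GGap.deeper (Fin.zero_le _) (by simp) (ihR hv rfl h)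

lemma ggap_encB_mono {B B' : BTree TB}
    (h : BTreeLE (fun x y => GGap 0 (enc x) (enc y)) B B') :
    GGap (encB B).root (encB B) (encB B') := by
  induction h with
  | @leaf x y hxy =>
    have : (encB (BTree.leaf x)).root = 0 := by simp only [encB]; exact enc_root x
    rw [this]
    simpa [encB] using hxy
  | @left s t₁ t₂ _ ih =>
    simp only [encB]
    exact GGap.deeper (fin2_le_one _) (by simp) ih
  | @right s t₁ t₂ _ ih =>
    simp only [encB]
    exact GGap.deeper (fin2_le_one _) (by simp) ih
  | @node s₁ s₂ t₁ t₂ _ _ ih1 ih2 =>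
    simp only [encB]
    exact GGap.here (GEmb.node (GForest.cons ih1 (GForest.cons ih2 GForest.nil)))

lemma forward {s t : TB} (h : TBle s t) : GGap 0 (enc s) (enc t) := by
  refine h (fun x y => GGap 0 (enc x) (enc y)) (fun x => ggap_refl 0 (enc x))
    (fun {a b c} h1 h2 => ggap0_trans h1 h2) ?_ ?_ ?_
  · intro u
    obtain ⟨l, hl⟩ := enc_ex u
    rw [hl, enc]
    exact GGap.here (GEmb.node (gforest_nil_left l))
  · intro u B v hv hR
    rw [enc]
    exact GGap.deeper le_rfl (by simp) (ggap_encB_of_leaf hv rfl hR)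
  · intro B B' hBB'
    rw [enc, enc]
    exact GGap.here (GEmb.node (GForest.cons (ggap_encB_mono hBB') GForest.nil))

/-! ### Backward direction -/

lemma gemb_root {T T' : LTree} (h : GEmb T T') : T.root = T'.root := by
  cases h; rfl

lemma sizeOf_pos_tb (t : TB) : 1 ≤ sizeOf t := by cases t <;> simp <;> omega

lemma sizeOf_pos_btree (B : BTree TB) : 1 ≤ sizeOf B := by cases B <;> simp <;> omega

lemma backward_aux : ∀ n : ℕ,
    (∀ t : TB, sizeOf t ≤ n → ∀ (s : TB) (m : Fin 2),
      GGap m (enc s) (enc t) → TBle s t) ∧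
    (∀ B' : BTree TB, sizeOf B' ≤ n → ∀ B : BTree TB,
      GGap (encB B).root (encB B) (encB B') → BTreeLE TBle B B') ∧
    (∀ B' : BTree TB, sizeOf B' ≤ n → ∀ (s : TB) (m : Fin 2),
      GGap m (enc s) (encB B') → ∃ v ∈ B'.leaves, TBle s v) := by
  intro n
  induction n with
  | zero =>
    refine ⟨?_, ?_, ?_⟩
    · intro t ht; have := sizeOf_pos_tb t; omega
    · intro B' hB' _; have := sizeOf_pos_btree B'; omega
    · intro B' hB'; have := sizeOf_pos_btree B'; omega
  | succ n ih =>
    obtain ⟨ihP, ihQ, ihS⟩ := ih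
    refine ⟨?_, ?_, ?_⟩
    · -- P : terms
      intro t ht s m h
      cases s with
      | circ => exact TBle_circ t
      | node B =>
        have hs : enc (TB.node B) = LTree.node 0 [encB B] := by simp [enc]
        rw [hs] at h
        cases t with
        | circ =>
          exfalso
          rw [show enc TB.circ = LTree.node 0 [] from by simp [enc]] at h
          cases h with
          | here he =>
            cases he with
            | node hf => cases hf
          | deeper _ hc _ => simp at hc
        | node B' =>
          have ht' : enc (TB.node B') = LTree.node 0 [encB B'] := by simp [enc]
          rw [ht'] at h
          have hsz : sizeOf B' ≤ n := by simp at ht; omega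
          cases h with
          | here he =>
            cases he with
            | node hf =>
              cases hf with
              | skip hf' => cases hf'
              | cons hg _ => exact TBle_node (ihQ B' hsz B hg)
          | deeper _ hc hg =>
            simp at hc
            subst hc
            obtain ⟨v, hv, hle⟩ := ihS B' hsz (TB.node B) m (by rw [hs]; exact hg)
            exact TBle_leaf hv hle
    · -- Q : binary trees against binary trees
      intro B' hB' B h
      cases B' with
      | leaf y =>
        rw [show encB (BTree.leaf y) = enc y from by simp [encB]] at h
        cases y with
        | circ =>
          rw [show enc TB.circ = LTree.node 0 [] from by simp [enc]] at h
          cases h with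
          | here he =>
            cases B with
            | leaf x =>
              rw [show encB (BTree.leaf x) = enc x from by simp [encB]] at he
              have hp : GGap (0 : Fin 2) (enc x) (enc TB.circ) := by
                rw [show enc TB.circ = LTree.node 0 [] from by simp [enc]]
                exact GGap.here he
              have hx : sizeOf (TB.circ) ≤ n := by simp at hB' ⊢; omega
              exact BTreeLE.leaf (ihP TB.circ hx x 0 hp)
            | node L R =>
              exfalso
              rw [show encB (BTree.node L R) = LTree.node 1 [encB L, encB R] from by
                simp [encB]] at he
              have := gemb_root he
              simp [LTree.root] at this
          | deeper _ hc _ => simp at hc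
        | node B₀ =>
          rw [show enc (TB.node B₀) = LTree.node 0 [encB B₀] from by simp [enc]] at h
          have hsz : sizeOf B₀ ≤ n := by simp at hB'; omega
          cases h with
          | here he =>
            cases B with
            | leaf x =>
              rw [show encB (BTree.leaf x) = enc x from by simp [encB]] at he
              have hp : GGap (0 : Fin 2) (enc x) (enc (TB.node B₀)) := by
                rw [show enc (TB.node B₀) = LTree.node 0 [encB B₀] from by simp [enc]]
                exact GGap.here he
              have hx : sizeOf (TB.node B₀) ≤ n := by simp at hB' ⊢; omega
              exact BTreeLE.leaf (ihP (TB.node B₀) hx x 0 hp)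
            | node L R =>
              exfalso
              rw [show encB (BTree.node L R) = LTree.node 1 [encB L, encB R] from by
                simp [encB]] at he
              have := gemb_root he
              simp [LTree.root] at this
          | deeper hb hc hg =>
            simp at hc
            subst hc
            cases B with
            | leaf x =>
              rw [show encB (BTree.leaf x) = enc x from by simp [encB], enc_root x] at hg
              obtain ⟨v, hv, hle⟩ := ihS B₀ hsz x 0 hg
              exact BTreeLE.leaf (TBle_leaf hv hle)
            | node L R =>
              exfalso
              rw [show encB (BTree.node L R) = LTree.node 1 [encB L, encB R] from by
                simp [encB]] at hb
              simp [LTree.root] at hb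
      | node L' R' =>
        rw [show encB (BTree.node L' R') = LTree.node 1 [encB L', encB R'] from by
          simp [encB]] at h
        have hszL : sizeOf L' ≤ n := by simp at hB'; omega
        have hszR : sizeOf R' ≤ n := by simp at hB'; omega
        cases h with
        | here he =>
          cases B with
          | leaf x =>
            exfalso
            rw [show encB (BTree.leaf x) = enc x from by simp [encB]] at he
            have := gemb_root he
            rw [enc_root x] at this
            simp [LTree.root] at this
          | node s₁ s₂ =>
            rw [show encB (BTree.node s₁ s₂) = LTree.node 1 [encB s₁, encB s₂] from by
              simp [encB]] at he
            cases he with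
            | node hf =>
              cases hf with
              | skip hf₂ =>
                cases hf₂ with
                | skip hf₃ => cases hf₃
                | cons _ hf₃ => cases hf₃
              | cons hg₁ hf₂ =>
                cases hf₂ with
                | skip hf₃ => cases hf₃
                | cons hg₂ _ =>
                  exact BTreeLE.node (ihQ L' hszL s₁ hg₁) (ihQ R' hszR s₂ hg₂)
        | deeper hb hc hg =>
          simp at hc
          rcases hc with rfl | rfl
          · exact BTreeLE.left (ihQ L' hszL B hg)
          · exact BTreeLE.right (ihQ R' hszR B hg)
    · -- S : terms against binary trees
      intro B' hB' s m h
      cases B' with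
      | leaf v =>
        rw [show encB (BTree.leaf v) = enc v from by simp [encB]] at h
        have hsz : sizeOf v ≤ n := by simp at hB'; omega
        exact ⟨v, by simp [BTree.leaves], ihP v hsz s m h⟩
      | node L R =>
        rw [show encB (BTree.node L R) = LTree.node 1 [encB L, encB R] from by
          simp [encB]] at h
        have hszL : sizeOf L ≤ n := by simp at hB'; omega
        have hszR : sizeOf R ≤ n := by simp at hB'; omega
        cases h with
        | here he =>
          exfalso
          have := gemb_root he
          rw [enc_root s] at this
          simp [LTree.root] at this
        | deeper _ hc hg =>
          simp at hc
          rcases hc with rfl | rfl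
          · obtain ⟨v, hv, hle⟩ := ihS L hszL s m hg
            exact ⟨v, by simp [BTree.leaves, hv], hle⟩
          · obtain ⟨v, hv, hle⟩ := ihS R hszR s m hg
            exact ⟨v, by simp [BTree.leaves, hv], hle⟩

lemma backward {s t : TB} (h : GGap 0 (enc s) (enc t)) : TBle s t :=
  (backward_aux (sizeOf t)).1 t le_rfl s 0 h

/-! ### Bijectivity -/

lemma enc_inj_aux : ∀ n : ℕ,
    (∀ s : TB, sizeOf s ≤ n → ∀ t : TB, enc s = enc t → s = t) ∧
    (∀ B : BTree TB, sizeOf B ≤ n → ∀ B' : BTree TB, encB B = encB B' → B = B') := by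
  intro n
  induction n with
  | zero =>
    constructor
    · intro s hs; have := sizeOf_pos_tb s; omega
    · intro B hB; have := sizeOf_pos_btree B; omega
  | succ n ih =>
    obtain ⟨ihP, ihQ⟩ := ih
    constructor
    · intro s hs t h
      cases s with
      | circ =>
        cases t with
        | circ => rfl
        | node B' => exfalso; simp [enc] at h
      | node B =>
        cases t with
        | circ => exfalso; simp [enc] at h
        | node B' =>
          simp only [enc] at h
          injection h with h1 h2
          injection h2 with h3 _
          have hsz : sizeOf B ≤ n := by simp at hs; omega
          rw [ihQ B hsz B' h3]
    · intro B hB B' h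
      cases B with
      | leaf x =>
        cases B' with
        | leaf y =>
          simp only [encB] at h
          have hsz : sizeOf x ≤ n := by simp at hB; omega
          rw [ihP x hsz y h]
        | node L' R' =>
          exfalso
          simp only [encB] at h
          have := congrArg LTree.root h
          rw [enc_root x] at this
          simp [LTree.root] at this
      | node L R =>
        cases B' with
        | leaf y =>
          exfalso
          simp only [encB] at h
          have := congrArg LTree.root h
          rw [enc_root y] at this
          simp [LTree.root] at this
        | node L' R' =>
          simp only [encB] at h
          injection h with h1 h2
          injection h2 with h3 h4
          injection h4 with h5 _
          have hszL : sizeOf L ≤ n := by simp at hB; omega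
          have hszR : sizeOf R ≤ n := by simp at hB; omega
          rw [ihQ L hszL L' h3, ihQ R hszR R' h5]

lemma enc_inj {s t : TB} (h : enc s = enc t) : s = t :=
  (enc_inj_aux (sizeOf s)).1 s le_rfl t h

lemma enc_surj : ∀ T : LTree, OkT2 T →
    (∃ B : BTree TB, encB B = T) ∧ (T.root = 0 → ∃ t : TB, enc t = T) := by
  intro T hT
  induction hT with
  | zero_nil =>
    exact ⟨⟨BTree.leaf TB.circ, by simp [encB, enc]⟩,
      fun _ => ⟨TB.circ, by simp [enc]⟩⟩
  | @zero_one t _ ih =>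
    obtain ⟨⟨B, hB⟩, _⟩ := ih
    refine ⟨⟨BTree.leaf (TB.node B), ?_⟩, fun _ => ⟨TB.node B, ?_⟩⟩ <;>
      simp [encB, enc, hB]
  | @one_two t₁ t₂ _ _ ih₁ ih₂ =>
    obtain ⟨⟨B₁, hB₁⟩, _⟩ := ih₁
    obtain ⟨⟨B₂, hB₂⟩, _⟩ := ih₂
    refine ⟨⟨BTree.node B₁ B₂, by simp [encB, hB₁, hB₂]⟩, fun h => ?_⟩
    simp [LTree.root] at h

/-! ### Main theorem -/

/-- `T(B(·))` is order-isomorphic to `(T̄₂, ≤_gap)`. -/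
theorem stmt13 :
    ∃ g : TB → TBar2, Function.Bijective g ∧
      ∀ s t : TB, TBle s t ↔ gapLE (g s) (g t) := by
  refine ⟨fun t => ⟨enc t, okT2_enc t, enc_root t⟩, ⟨?_, ?_⟩, ?_⟩
  · intro s t h
    exact enc_inj (congrArg Subtype.val h)
  · rintro ⟨T, hT, hroot⟩
    obtain ⟨_, h2⟩ := enc_surj T hT
    obtain ⟨t, ht⟩ := h2 hroot
    exact ⟨t, Subtype.ext ht⟩
  · intro s t
    exact ⟨forward, backward⟩
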